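/- Let G' be obtained from a biconnected loopless 4-regular multigraph G by contracting a maximal chain of lenses u_1, ..., u_k (k ≥ 2), i.e., deleting the internal vertices u_2, ..., u_{k-1} together with their incident edges and adding two parallel edges between u_1 and u_k. Then G' is again a biconnected loopless 4-regular multigraph. -/

import Mathlib

/-- The edge `e` joins the vertices `x` and `y` (in either orientation). -/
def MGBetween {V E : Type} (f s : E → V) (e : E) (x y : V) : Prop :=
  (f e = x ∧ s e = y) ∨ (f e = y ∧ s e = x)

/-- The edge `e` is incident to the vertex `v`. -/
def MGInc {V E : Type} (f s : E → V) (v : V) (e : E) : Prop := f e = v ∨ s e = v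

/-- Two vertices are adjacent if some edge joins them. -/
def MGAdj {V E : Type} (f s : E → V) (x y : V) : Prop := ∃ e, MGBetween f s e x y

/-- The multigraph has no loops. -/
def MGLoopless {V E : Type} (f s : E → V) : Prop := ∀ e, f e ≠ s e

/-- Every vertex has degree exactly `4`. -/
def MGFourRegular {V E : Type} (f s : E → V) : Prop :=
  ∀ v : V, Nat.card {e : E // MGInc f s v e} = 4

/-- The multigraph is connected. -/
def MGConnected {V E : Type} (f s : E → V) : Prop :=
  Nonempty V ∧ ∀ u v : V, Relation.ReflTransGen (MGAdj f s) u v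

/-- Reachability by walks avoiding the vertex `w`. -/
def MGReachAvoiding {V E : Type} (f s : E → V) (w : V) : V → V → Prop :=
  Relation.ReflTransGen (fun x y => x ≠ w ∧ y ≠ w ∧ MGAdj f s x y)

/-- The multigraph is biconnected: connected and without cutvertices. -/
def MGBiconnected {V E : Type} (f s : E → V) : Prop :=
  MGConnected f s ∧ ∀ w u v : V, u ≠ w → v ≠ w → MGReachAvoiding f s w u v

/-- Reachability by walks avoiding both vertices `u` and `v`. -/
def MGReachAvoiding2 {V E : Type} (f s : E → V) (u v : V) : V → V → Prop :=
  Relation.ReflTransGen (fun x y => x ≠ u ∧ x ≠ v ∧ y ≠ u ∧ y ≠ v ∧ MGAdj f s x y)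


lemma aux_card_sum {α β : Type} [Finite α] [Finite β] (P : α ⊕ β → Prop) :
    Nat.card {x : α ⊕ β // P x}
      = Nat.card {a : α // P (Sum.inl a)} + Nat.card {b : β // P (Sum.inr b)} := by
  rw [← Nat.card_sum]
  exact Nat.card_congr Equiv.subtypeSum

lemma aux_card_split {α : Type} [Finite α] (P Q : α → Prop) :
    Nat.card {x : α // P x}
      = Nat.card {x : α // P x ∧ Q x} + Nat.card {x : α // P x ∧ ¬ Q x} := by
  classical
  rw [← Nat.card_sum]
  exact Nat.card_congr ((Equiv.sumCompl (fun y : {x // P x} => Q y.val)).symm.trans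
    (Equiv.sumCongr (Equiv.subtypeSubtypeEquivSubtypeInter P Q)
      (Equiv.subtypeSubtypeEquivSubtypeInter P (fun x => ¬ Q x))))

lemma aux_rtg_lift {α β : Type} {r : α → α → Prop} {r' : β → β → Prop} (π : α → β)
    (h : ∀ x y, r x y → π x = π y ∨ r' (π x) (π y)) {a b : α}
    (hab : Relation.ReflTransGen r a b) :
    Relation.ReflTransGen r' (π a) (π b) := by
  induction hab with
  | refl => exact Relation.ReflTransGen.refl
  | tail _ h2 ih =>
    rcases h _ _ h2 with he | hr
    · rwa [← he]
    · exact ih.tail hr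
/-- Contracting a maximal chain of lenses `u 0, …, u (k-1)` (consecutive
vertices joined by exactly two parallel edges, internal vertices incident only to chain edges)
in a biconnected loopless 4-regular multigraph — deleting the internal vertices with their
incident edges and adding two parallel edges between `u 0` and `u (k-1)` — yields again a
biconnected loopless 4-regular multigraph. -/
theorem stmt_11 {V E : Type} [Finite V] [Finite E] (f s : E → V)
    (hloopless : MGLoopless f s) (hreg : MGFourRegular f s) (hbi : MGBiconnected f s)
    (k : ℕ) (hk : 2 ≤ k) (u : Fin k → V) (hu : Function.Injective u)
    -- exactly two parallel edges between consecutive chain vertices: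
    (hpair : ∀ (i : ℕ) (h : i + 1 < k),
      Nat.card {e : E // MGBetween f s e (u ⟨i, Nat.lt_of_succ_lt h⟩) (u ⟨i + 1, h⟩)} = 2)
    -- internal chain vertices are incident only to chain edges:
    (hint : ∀ (i : ℕ) (h1 : 0 < i) (h2 : i + 1 < k) (e : E),
      MGInc f s (u ⟨i, Nat.lt_of_succ_lt h2⟩) e →
      ∃ (j : ℕ) (hj : j + 1 < k),
        MGBetween f s e (u ⟨j, Nat.lt_of_succ_lt hj⟩) (u ⟨j + 1, hj⟩))
    -- the contracted multigraph `G'`: non-internal vertices, non-chain edges plus two new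
    -- parallel edges between `u 0` and `u (k-1)`:
    (f' s' : ({e : E // ¬ ∃ (j : ℕ) (hj : j + 1 < k),
        MGBetween f s e (u ⟨j, Nat.lt_of_succ_lt hj⟩) (u ⟨j + 1, hj⟩)} ⊕ Fin 2) →
      {w : V // ¬ ∃ (i : ℕ) (_ : 0 < i) (h2 : i + 1 < k), w = u ⟨i, Nat.lt_of_succ_lt h2⟩})
    (hf' : ∀ e, (f' (Sum.inl e) : V) = f e.val ∧ (s' (Sum.inl e) : V) = s e.val)
    (hnew : ∀ j : Fin 2, (f' (Sum.inr j) : V) = u ⟨0, by omega⟩ ∧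
      (s' (Sum.inr j) : V) = u ⟨k - 1, by omega⟩) :
    MGLoopless f' s' ∧ MGFourRegular f' s' ∧ MGBiconnected f' s' := by
  classical
  have h0 : 0 < k := by omega
  have hk1 : k - 1 < k := by omega
  have h01 : 0 + 1 < k := by omega
  have ueq : ∀ (a b : ℕ) (ha : a < k) (hb : b < k), a = b → u ⟨a, ha⟩ = u ⟨b, hb⟩ := by
    intro a b ha hb h; subst h; rfl
  have uinj : ∀ (a b : ℕ) (ha : a < k) (hb : b < k), u ⟨a, ha⟩ = u ⟨b, hb⟩ → a = b :=
    fun a b ha hb h => congrArg Fin.val (hu h)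
  have hn0 : ¬ ∃ (i : ℕ) (_ : 0 < i) (h2 : i + 1 < k),
      u ⟨0, h0⟩ = u ⟨i, Nat.lt_of_succ_lt h2⟩ := by
    rintro ⟨i, hi1, hi2, hx⟩
    have := uinj 0 i h0 (Nat.lt_of_succ_lt hi2) hx
    omega
  have hn1 : ¬ ∃ (i : ℕ) (_ : 0 < i) (h2 : i + 1 < k),
      u ⟨k - 1, hk1⟩ = u ⟨i, Nat.lt_of_succ_lt h2⟩ := by
    rintro ⟨i, hi1, hi2, hx⟩
    have := uinj (k - 1) i hk1 (Nat.lt_of_succ_lt hi2) hx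
    omega
  let U0 : {w : V // ¬ ∃ (i : ℕ) (_ : 0 < i) (h2 : i + 1 < k),
      w = u ⟨i, Nat.lt_of_succ_lt h2⟩} := ⟨u ⟨0, h0⟩, hn0⟩
  let U1 : {w : V // ¬ ∃ (i : ℕ) (_ : 0 < i) (h2 : i + 1 < k),
      w = u ⟨i, Nat.lt_of_succ_lt h2⟩} := ⟨u ⟨k - 1, hk1⟩, hn1⟩
  have hnew0 : ∀ j : Fin 2, (f' (Sum.inr j) : V) = u ⟨0, h0⟩ := fun j => (hnew j).1
  have hnew1 : ∀ j : Fin 2, (s' (Sum.inr j) : V) = u ⟨k - 1, hk1⟩ := fun j => (hnew j).2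
  have hU01 : U0 ≠ U1 := by
    intro h
    have := uinj 0 (k - 1) h0 hk1 (congrArg Subtype.val h)
    omega
  have endpt : ∀ (e : E) (a b x : V), MGBetween f s e a b → MGInc f s x e →
      x = a ∨ x = b := by
    rintro e a b x (⟨h1, h2⟩ | ⟨h1, h2⟩) (h3 | h3)
    · exact Or.inl (h3.symm.trans h1)
    · exact Or.inr (h3.symm.trans h2)
    · exact Or.inr (h3.symm.trans h1)
    · exact Or.inl (h3.symm.trans h2)
  have chainVert : ∀ e : E,
      (∃ (j : ℕ) (hj : j + 1 < k),
        MGBetween f s e (u ⟨j, Nat.lt_of_succ_lt hj⟩) (u ⟨j + 1, hj⟩)) →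
      ∀ x : V, MGInc f s x e →
      (¬ ∃ (i : ℕ) (_ : 0 < i) (h2 : i + 1 < k), x = u ⟨i, Nat.lt_of_succ_lt h2⟩) →
      x = u ⟨0, h0⟩ ∨ x = u ⟨k - 1, hk1⟩ := by
    rintro e ⟨j, hj, hb⟩ x hx hnx
    rcases endpt e _ _ x hb hx with h | h
    · have hj0 : j = 0 := by
        by_contra hne'
        exact hnx ⟨j, by omega, hj, h⟩
      exact Or.inl (h.trans (ueq j 0 _ h0 hj0))
    · by_cases hje : j + 1 = k - 1
      · exact Or.inr (h.trans (ueq (j + 1) (k - 1) hj hk1 hje))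
      · exact absurd ⟨j + 1, by omega, by omega, h⟩ hnx
  have notchain_end : ∀ e : E,
      (¬ ∃ (j : ℕ) (hj : j + 1 < k),
        MGBetween f s e (u ⟨j, Nat.lt_of_succ_lt hj⟩) (u ⟨j + 1, hj⟩)) →
      ∀ x : V, MGInc f s x e →
      ¬ ∃ (i : ℕ) (_ : 0 < i) (h2 : i + 1 < k), x = u ⟨i, Nat.lt_of_succ_lt h2⟩ := by
    rintro e hch x hx ⟨i, hi1, hi2, rfl⟩
    exact hch (hint i hi1 hi2 e hx)
  let π : {w : V // ¬ ∃ (i : ℕ) (_ : 0 < i) (h2 : i + 1 < k),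
      w = u ⟨i, Nat.lt_of_succ_lt h2⟩} → V →
      {w : V // ¬ ∃ (i : ℕ) (_ : 0 < i) (h2 : i + 1 < k),
      w = u ⟨i, Nat.lt_of_succ_lt h2⟩} := fun c x =>
    if h : ∃ (i : ℕ) (_ : 0 < i) (h2 : i + 1 < k), x = u ⟨i, Nat.lt_of_succ_lt h2⟩ then c
    else ⟨x, h⟩
  have hπpos : ∀ c x (h : ∃ (i : ℕ) (_ : 0 < i) (h2 : i + 1 < k),
      x = u ⟨i, Nat.lt_of_succ_lt h2⟩), π c x = c := fun c x h => dif_pos h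
  have hπneg : ∀ c x (h : ¬ ∃ (i : ℕ) (_ : 0 < i) (h2 : i + 1 < k),
      x = u ⟨i, Nat.lt_of_succ_lt h2⟩), π c x = ⟨x, h⟩ := fun c x h => dif_neg h
  have hπeta : ∀ c a, π c a.val = a :=
    fun c a => (hπneg c a.val a.prop).trans (Subtype.coe_eta a a.prop)
  have adj01 : MGAdj f' s' U0 U1 :=
    ⟨Sum.inr 0, Or.inl ⟨Subtype.ext (hnew0 0), Subtype.ext (hnew1 0)⟩⟩
  have adj10 : MGAdj f' s' U1 U0 :=
    ⟨Sum.inr 0, Or.inr ⟨Subtype.ext (hnew0 0), Subtype.ext (hnew1 0)⟩⟩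
  have pairAdj : ∀ a b, (a = U0 ∨ a = U1) → (b = U0 ∨ b = U1) →
      a = b ∨ MGAdj f' s' a b := by
    rintro a b (rfl | rfl) (rfl | rfl)
    exacts [Or.inl rfl, Or.inr adj01, Or.inr adj10, Or.inl rfl]
  have hstep : ∀ c, (c = U0 ∨ c = U1) → ∀ x y : V, MGAdj f s x y →
      π c x = π c y ∨ MGAdj f' s' (π c x) (π c y) := by
    rintro c hc x y ⟨e, he⟩
    have hx : MGInc f s x e := by
      rcases he with ⟨h1, h2⟩ | ⟨h1, h2⟩
      exacts [Or.inl h1, Or.inr h2]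
    have hy : MGInc f s y e := by
      rcases he with ⟨h1, h2⟩ | ⟨h1, h2⟩
      exacts [Or.inr h2, Or.inl h1]
    by_cases hch : ∃ (j : ℕ) (hj : j + 1 < k),
        MGBetween f s e (u ⟨j, Nat.lt_of_succ_lt hj⟩) (u ⟨j + 1, hj⟩)
    · have hmem : ∀ z : V, MGInc f s z e → π c z = U0 ∨ π c z = U1 := by
        intro z hz
        by_cases hzi : ∃ (i : ℕ) (_ : 0 < i) (h2 : i + 1 < k),
            z = u ⟨i, Nat.lt_of_succ_lt h2⟩
        · rw [hπpos c z hzi]; exact hc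
        · rw [hπneg c z hzi]
          rcases chainVert e hch z hz hzi with h | h
          exacts [Or.inl (Subtype.ext h), Or.inr (Subtype.ext h)]
      exact pairAdj _ _ (hmem x hx) (hmem y hy)
    · have hnx := notchain_end e hch x hx
      have hny := notchain_end e hch y hy
      rw [hπneg c x hnx, hπneg c y hny]
      refine Or.inr ⟨Sum.inl ⟨e, hch⟩, ?_⟩
      rcases he with ⟨h1, h2⟩ | ⟨h1, h2⟩
      · exact Or.inl ⟨Subtype.ext ((hf' ⟨e, hch⟩).1.trans h1),
          Subtype.ext ((hf' ⟨e, hch⟩).2.trans h2)⟩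
      · exact Or.inr ⟨Subtype.ext ((hf' ⟨e, hch⟩).1.trans h1),
          Subtype.ext ((hf' ⟨e, hch⟩).2.trans h2)⟩
  have bi2 : ∀ w a b, a ≠ w → b ≠ w → MGReachAvoiding f' s' w a b := by
    intro w a b haw hbw
    have hw : MGReachAvoiding f s w.val a.val b.val :=
      hbi.2 w.val a.val b.val (fun h => haw (Subtype.ext h)) (fun h => hbw (Subtype.ext h))
    have key : ∀ c, (c = U0 ∨ c = U1) → c ≠ w → MGReachAvoiding f' s' w a b := by
      intro c hc hcw
      have hπw : ∀ x : V, x ≠ w.val → π c x ≠ w := by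
        intro x hx heq
        by_cases hxi : ∃ (i : ℕ) (_ : 0 < i) (h2 : i + 1 < k),
            x = u ⟨i, Nat.lt_of_succ_lt h2⟩
        · rw [hπpos c x hxi] at heq; exact hcw heq
        · rw [hπneg c x hxi] at heq; exact hx (congrArg Subtype.val heq)
      have h2 := aux_rtg_lift (π c)
        (r' := fun x y => x ≠ w ∧ y ≠ w ∧ MGAdj f' s' x y)
        (fun x y hxy => by
          rcases hstep c hc x y hxy.2.2 with h | h
          · exact Or.inl h
          · exact Or.inr ⟨hπw x hxy.1, hπw y hxy.2.1, h⟩) hw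
      rwa [hπeta c a, hπeta c b] at h2
    by_cases hw0 : w = U0
    · exact key U1 (Or.inr rfl) (fun he => hU01 ((he.trans hw0).symm))
    · exact key U0 (Or.inl rfl) (fun he => hw0 he.symm)
  have conn : ∀ a b, Relation.ReflTransGen (MGAdj f' s') a b := by
    intro a b
    have mono : ∀ w, MGReachAvoiding f' s' w a b →
        Relation.ReflTransGen (MGAdj f' s') a b :=
      fun w h => Relation.ReflTransGen.mono (r := fun x y => x ≠ w ∧ y ≠ w ∧ MGAdj f' s' x y)
        (fun x y (hxy : x ≠ w ∧ y ≠ w ∧ MGAdj f' s' x y) => hxy.2.2) a b h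
    by_cases hab : a = b
    · exact hab ▸ Relation.ReflTransGen.refl
    · by_cases ha0 : a = U0
      · by_cases hb1 : b = U1
        · rw [ha0, hb1]; exact Relation.ReflTransGen.single adj01
        · exact mono U1 (bi2 U1 a b (by rw [ha0]; exact hU01) hb1)
      · by_cases hb0 : b = U0
        · by_cases ha1 : a = U1
          · rw [ha1, hb0]; exact Relation.ReflTransGen.single adj10
          · exact mono U1 (bi2 U1 a b ha1 (by rw [hb0]; exact hU01))
        · exact mono U0 (bi2 U0 a b ha0 hb0)
  have hloop : MGLoopless f' s' := by
    intro e' h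
    cases e' with
    | inl a =>
      exact hloopless a.val (((hf' a).1.symm.trans (congrArg Subtype.val h)).trans (hf' a).2)
    | inr j =>
      have h1 : u ⟨0, h0⟩ = u ⟨k - 1, hk1⟩ :=
        ((hnew0 j).symm.trans (congrArg Subtype.val h)).trans (hnew1 j)
      have := uinj 0 (k - 1) h0 hk1 h1
      omega
  have hreg' : MGFourRegular f' s' := by
    intro v
    rw [aux_card_sum]
    have hEquivInl : {a : {e : E // ¬ ∃ (j : ℕ) (hj : j + 1 < k),
        MGBetween f s e (u ⟨j, Nat.lt_of_succ_lt hj⟩) (u ⟨j + 1, hj⟩)} //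
          MGInc f' s' v (Sum.inl a)}
        ≃ {e : E // MGInc f s v.val e ∧ ¬ ∃ (j : ℕ) (hj : j + 1 < k),
            MGBetween f s e (u ⟨j, Nat.lt_of_succ_lt hj⟩) (u ⟨j + 1, hj⟩)} := by
      refine (Equiv.subtypeEquivRight ?_).trans
        ((Equiv.subtypeSubtypeEquivSubtypeInter _ _).trans
          (Equiv.subtypeEquivRight fun e => and_comm))
      intro a
      constructor
      · rintro (h | h)
        · exact Or.inl (by rw [← (hf' a).1, h])
        · exact Or.inr (by rw [← (hf' a).2, h])
      · rintro (h | h)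
        · exact Or.inl (Subtype.ext ((hf' a).1.trans h))
        · exact Or.inr (Subtype.ext ((hf' a).2.trans h))
    rw [Nat.card_congr hEquivInl]
    have h4 := hreg v.val
    rw [aux_card_split (fun e => MGInc f s v.val e)
      (fun e => ∃ (j : ℕ) (hj : j + 1 < k),
        MGBetween f s e (u ⟨j, Nat.lt_of_succ_lt hj⟩) (u ⟨j + 1, hj⟩))] at h4
    by_cases hv0 : v.val = u ⟨0, h0⟩
    · have hCh2 : Nat.card {e : E // MGInc f s v.val e ∧ ∃ (j : ℕ) (hj : j + 1 < k),
          MGBetween f s e (u ⟨j, Nat.lt_of_succ_lt hj⟩) (u ⟨j + 1, hj⟩)} = 2 := by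
        rw [Nat.card_congr (Equiv.subtypeEquivRight (q := fun e =>
          MGBetween f s e (u ⟨0, Nat.lt_of_succ_lt h01⟩) (u ⟨0 + 1, h01⟩)) ?_)]
        · exact hpair 0 h01
        · intro e
          constructor
          · rintro ⟨hinc, j, hj, hb⟩
            rcases endpt e _ _ _ hb hinc with h | h
            · have hj0 : j = 0 := (uinj 0 j h0 (Nat.lt_of_succ_lt hj)
                (hv0.symm.trans h)).symm
              subst hj0
              exact hb
            · have := uinj 0 (j + 1) h0 hj (hv0.symm.trans h)
              omega
          · intro hb
            refine ⟨?_, 0, h01, hb⟩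
            rcases hb with ⟨hh1, hh2⟩ | ⟨hh1, hh2⟩
            · exact Or.inl (hh1.trans hv0.symm)
            · exact Or.inr (hh2.trans hv0.symm)
      have hInr2 : Nat.card {b : Fin 2 // MGInc f' s' v (Sum.inr b)} = 2 := by
        have hall : ∀ b : Fin 2, MGInc f' s' v (Sum.inr b) :=
          fun b => Or.inl (Subtype.ext ((hnew0 b).trans hv0.symm))
        rw [Nat.card_congr (Equiv.subtypeUnivEquiv hall)]
        simp [Nat.card_eq_fintype_card]
      rw [hInr2]
      omega
    · by_cases hv1 : v.val = u ⟨k - 1, hk1⟩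
      · have hm : k - 2 + 1 < k := by omega
        have hidx : u ⟨k - 2 + 1, hm⟩ = u ⟨k - 1, hk1⟩ := ueq _ _ hm hk1 (by omega)
        have hCh2 : Nat.card {e : E // MGInc f s v.val e ∧ ∃ (j : ℕ) (hj : j + 1 < k),
            MGBetween f s e (u ⟨j, Nat.lt_of_succ_lt hj⟩) (u ⟨j + 1, hj⟩)} = 2 := by
          rw [Nat.card_congr (Equiv.subtypeEquivRight (q := fun e =>
            MGBetween f s e (u ⟨k - 2, Nat.lt_of_succ_lt hm⟩) (u ⟨k - 2 + 1, hm⟩)) ?_)]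
          · exact hpair (k - 2) hm
          · intro e
            constructor
            · rintro ⟨hinc, j, hj, hb⟩
              rcases endpt e _ _ _ hb hinc with h | h
              · have := uinj (k - 1) j hk1 (Nat.lt_of_succ_lt hj) (hv1.symm.trans h)
                omega
              · have hjm : j = k - 2 := by
                  have := uinj (k - 1) (j + 1) hk1 hj (hv1.symm.trans h)
                  omega
                subst hjm
                exact hb
            · intro hb
              refine ⟨?_, k - 2, hm, hb⟩
              rcases hb with ⟨hh1, hh2⟩ | ⟨hh1, hh2⟩
              · exact Or.inr (hh2.trans (hidx.trans hv1.symm))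
              · exact Or.inl (hh1.trans (hidx.trans hv1.symm))
        have hInr2 : Nat.card {b : Fin 2 // MGInc f' s' v (Sum.inr b)} = 2 := by
          have hall : ∀ b : Fin 2, MGInc f' s' v (Sum.inr b) :=
            fun b => Or.inr (Subtype.ext ((hnew1 b).trans hv1.symm))
          rw [Nat.card_congr (Equiv.subtypeUnivEquiv hall)]
          simp [Nat.card_eq_fintype_card]
        rw [hInr2]
        omega
      · have hCh0 : Nat.card {e : E // MGInc f s v.val e ∧ ∃ (j : ℕ) (hj : j + 1 < k),
            MGBetween f s e (u ⟨j, Nat.lt_of_succ_lt hj⟩) (u ⟨j + 1, hj⟩)} = 0 := by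
          have : IsEmpty {e : E // MGInc f s v.val e ∧ ∃ (j : ℕ) (hj : j + 1 < k),
              MGBetween f s e (u ⟨j, Nat.lt_of_succ_lt hj⟩) (u ⟨j + 1, hj⟩)} := by
            refine ⟨fun x => ?_⟩
            obtain ⟨e, hinc, hch⟩ := x
            rcases chainVert e hch v.val hinc v.prop with h | h
            exacts [hv0 h, hv1 h]
          exact Nat.card_of_isEmpty
        have hInr0 : Nat.card {b : Fin 2 // MGInc f' s' v (Sum.inr b)} = 0 := by
          have : IsEmpty {b : Fin 2 // MGInc f' s' v (Sum.inr b)} := by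
            refine ⟨fun x => ?_⟩
            obtain ⟨b, hb | hb⟩ := x
            · exact hv0 ((congrArg Subtype.val hb).symm.trans (hnew0 b))
            · exact hv1 ((congrArg Subtype.val hb).symm.trans (hnew1 b))
          exact Nat.card_of_isEmpty
        rw [hInr0]
        omega
  exact ⟨hloop, hreg', ⟨⟨U0⟩, conn⟩, bi2⟩
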